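/- Let (X,r) be a square-free solution of finite order |X| = n with cyclic degree p, let G = G(X,r), and let K be a field. Then for every integer k ≥ 1, the power-sum element s_k = Σ_{x ∈ X} ι(x)^{kp} of the group algebra K[G] lies in the center of K[G]. -/

import Mathlib

/-- The left action `σ_x(y)`: first component of `r (x, y)`. -/
def sig {X : Type*} (r : X × X → X × X) (x y : X) : X := (r (x, y)).1

/-- The right action `τ_y(x)`: second component of `r (x, y)`. -/
def tau {X : Type*} (r : X × X → X × X) (y x : X) : X := (r (x, y)).2

/-- `r¹² = r × id`. -/
def r12 {X : Type*} (r : X × X → X × X) : X × X × X → X × X × X :=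
  fun t => ((r (t.1, t.2.1)).1, (r (t.1, t.2.1)).2, t.2.2)

/-- `r²³ = id × r`. -/
def r23 {X : Type*} (r : X × X → X × X) : X × X × X → X × X × X :=
  fun t => (t.1, (r (t.2.1, t.2.2)).1, (r (t.2.1, t.2.2)).2)

/-- The braid relation `r¹² ∘ r²³ ∘ r¹² = r²³ ∘ r¹² ∘ r²³`. -/
def IsBraided {X : Type*} (r : X × X → X × X) : Prop :=
  r12 r ∘ r23 r ∘ r12 r = r23 r ∘ r12 r ∘ r23 r

/-- Nondegeneracy: every `σ_x` and every `τ_y` is bijective. -/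
def Nondegenerate {X : Type*} (r : X × X → X × X) : Prop :=
  (∀ x, Function.Bijective (sig r x)) ∧ (∀ y, Function.Bijective (tau r y))

/-- The defining relators of the group `G(X,r)`:
`x · y · (σ_x(y) · τ_y(x))⁻¹` for all `x, y ∈ X`. -/
def ybRels {X : Type*} (r : X × X → X × X) : Set (FreeGroup X) :=
  { w | ∃ x y : X, w = FreeGroup.of x * FreeGroup.of y *
      (FreeGroup.of (sig r x y) * FreeGroup.of (tau r y x))⁻¹ }

/-- The group `G(X,r)` associated with `(X,r)`, presented by generators `X`
and relations `x y = σ_x(y) τ_y(x)`. -/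
abbrev YBGroup {X : Type*} (r : X × X → X × X) := PresentedGroup (ybRels r)

/-- The canonical map `ι : X → G(X,r)`. -/
def ybι {X : Type*} (r : X × X → X × X) : X → YBGroup r := PresentedGroup.of

section Aux

variable {X : Type*} {r : X × X → X × X}

/-- Square-freeness on the left action. -/
lemma sig_self (hsf : ∀ x : X, r (x, x) = (x, x)) (x : X) : sig r x x = x := by
  simp [sig, hsf]

/-- First component of the braid relation:
`σ_{σ_x y}(σ_{τ_y x} z) = σ_x (σ_y z)`. -/
lemma braid1 (hbr : IsBraided r) (x y z : X) :
    sig r (sig r x y) (sig r (tau r y x) z) = sig r x (sig r y z) := by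
  have h := congrFun hbr (x, y, z)
  simp only [Function.comp_apply, r12, r23] at h
  have h1 := congrArg Prod.fst h
  simpa [sig, tau] using h1

/-- First component of involutivity: `σ_{σ_x y}(τ_y x) = x`. -/
lemma inv1 (hinv : Function.Involutive r) (x y : X) :
    sig r (sig r x y) (tau r y x) = x := by
  have h : r (sig r x y, tau r y x) = (x, y) := by
    have := hinv (x, y)
    simpa [sig, tau] using this
  simpa [sig] using congrArg Prod.fst h

/-- The `lri` condition for square-free solutions: `σ_y (τ_y x) = x`. -/
lemma sig_tau (hnd : Nondegenerate r) (hinv : Function.Involutive r)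
    (hbr : IsBraided r) (hsf : ∀ x : X, r (x, x) = (x, x)) (x y : X) :
    sig r y (tau r y x) = x := by
  have hb := braid1 hbr x y (tau r y x)
  rw [sig_self hsf (tau r y x)] at hb
  rw [inv1 hinv x y] at hb
  -- hb : x = sig r x (sig r y (tau r y x))
  have := (hnd.1 x).injective (a₁ := sig r y (tau r y x)) (a₂ := x)
  apply this
  rw [← hb, sig_self hsf]

/-- `τ_y (σ_y x) = x`. -/
lemma tau_sig (hnd : Nondegenerate r) (hinv : Function.Involutive r)
    (hbr : IsBraided r) (hsf : ∀ x : X, r (x, x) = (x, x)) (x y : X) :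
    tau r y (sig r y x) = x := by
  apply (hnd.1 y).injective
  rw [sig_tau hnd hinv hbr hsf]

/-- The cyclic condition: `σ_{τ_x y}(x) = σ_y x`. -/
lemma cyclic (hnd : Nondegenerate r) (hinv : Function.Involutive r)
    (hbr : IsBraided r) (hsf : ∀ x : X, r (x, x) = (x, x)) (x y : X) :
    sig r (tau r x y) x = sig r y x := by
  have hb := braid1 hbr y x x
  rw [sig_self hsf x] at hb
  -- hb : sig r (sig r y x) (sig r (tau r x y) x) = sig r y x
  apply (hnd.1 (sig r y x)).injective
  rw [hb, sig_self hsf]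

/-- The defining relation in `G(X,r)`. -/
lemma ybrel (x y : X) :
    ybι r x * ybι r y = ybι r (sig r x y) * ybι r (tau r y x) := by
  have hmem : FreeGroup.of x * FreeGroup.of y *
      (FreeGroup.of (sig r x y) * FreeGroup.of (tau r y x))⁻¹ ∈ ybRels r := ⟨x, y, rfl⟩
  have h1 : PresentedGroup.mk (ybRels r) (FreeGroup.of x * FreeGroup.of y *
      (FreeGroup.of (sig r x y) * FreeGroup.of (tau r y x))⁻¹) = 1 := by
    apply (QuotientGroup.eq_one_iff _).mpr
    exact Subgroup.subset_normalClosure hmem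
  rw [map_mul, map_mul, map_inv, map_mul] at h1
  have h2 := mul_eq_one_iff_eq_inv.mp h1
  rw [inv_inv] at h2
  exact h2

/-- The key identity: `ι(y) · ι(x)^m = ι(σ_y x)^m · ι(τ_x^[m] y)` in `G(X,r)`. -/
lemma key (hnd : Nondegenerate r) (hinv : Function.Involutive r)
    (hbr : IsBraided r) (hsf : ∀ x : X, r (x, x) = (x, x)) (m : ℕ) (x : X) :
    ∀ y : X, ybι r y * ybι r x ^ m =
      ybι r (sig r y x) ^ m * ybι r ((tau r x)^[m] y) := by
  induction m with
  | zero => intro y; simp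
  | succ m ih =>
    intro y
    rw [pow_succ' (ybι r x) m, ← mul_assoc, ybrel y x, mul_assoc,
      ih (tau r x y), cyclic hnd hinv hbr hsf, ← mul_assoc, ← pow_succ',
      ← Function.iterate_succ_apply]

end Aux

/-- For a finite square-free solution `(X,r)` of order `n`
with cyclic degree `p` and a field `K`, every power-sum element
`s_k = Σ_{x ∈ X} ι(x)^{kp}` (`k ≥ 1`) lies in the center of the group algebra
`K[G(X,r)]`. -/
theorem power_sums_central {X : Type*} [Fintype X] (r : X × X → X × X)
    (hnd : Nondegenerate r) (hinv : Function.Involutive r) (hbr : IsBraided r)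
    (hsf : ∀ x : X, r (x, x) = (x, x)) (p : ℕ) (hp : 0 < p)
    (hpord : ∀ x : X, (sig r x)^[p] = id)
    (hpmin : ∀ q : ℕ, 0 < q → (∀ x : X, (sig r x)^[q] = id) → p ≤ q)
    (K : Type*) [Field K] :
    ∀ k : ℕ, 1 ≤ k →
      (∑ x : X, MonoidAlgebra.of K (YBGroup r) (ybι r x ^ (k * p)))
        ∈ Subalgebra.center K (MonoidAlgebra K (YBGroup r)) := by
  intro k _hk
  -- `τ_x^[p] = id`
  have htau : ∀ x : X, ∀ y : X, (tau r x)^[p] y = y := by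
    intro x y
    have hli : Function.LeftInverse (sig r x) (tau r x) :=
      fun z => sig_tau hnd hinv hbr hsf z x
    have := hli.iterate p y
    rwa [hpord x, id_eq] at this
  -- conjugation formula for p-th powers
  have hconj : ∀ y x : X,
      ybι r y * ybι r x ^ (k * p) = ybι r (sig r y x) ^ (k * p) * ybι r y := by
    intro y x
    have h1 : ybι r y * ybι r x ^ p = ybι r (sig r y x) ^ p * ybι r y := by
      have := key hnd hinv hbr hsf p x y
      rwa [htau x y] at this
    have h2 : ∀ j : ℕ, ybι r y * ybι r x ^ (j * p) =
        ybι r (sig r y x) ^ (j * p) * ybι r y := by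
      intro j
      induction j with
      | zero => simp
      | succ j ihj =>
        rw [Nat.succ_mul, pow_add, pow_add, ← mul_assoc, ihj, mul_assoc, h1,
          ← mul_assoc]
    exact h2 k
  set s : MonoidAlgebra K (YBGroup r) :=
    ∑ x : X, MonoidAlgebra.of K (YBGroup r) (ybι r x ^ (k * p)) with hs
  rw [Subalgebra.mem_center_iff]
  -- it suffices that `s` commutes with every group element
  have hgen : ∀ g : YBGroup r,
      MonoidAlgebra.of K (YBGroup r) g * s = s * MonoidAlgebra.of K (YBGroup r) g := by
    have hX : ∀ y : X,
        MonoidAlgebra.of K (YBGroup r) (ybι r y) * s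
          = s * MonoidAlgebra.of K (YBGroup r) (ybι r y) := by
      intro y
      rw [hs, Finset.mul_sum, Finset.sum_mul]
      have hre : ∀ x : X,
          MonoidAlgebra.of K (YBGroup r) (ybι r y) *
              MonoidAlgebra.of K (YBGroup r) (ybι r x ^ (k * p))
            = MonoidAlgebra.of K (YBGroup r) (ybι r (sig r y x) ^ (k * p)) *
              MonoidAlgebra.of K (YBGroup r) (ybι r y) := by
        intro x
        rw [← map_mul, ← map_mul, hconj y x]
      rw [Finset.sum_congr rfl (fun x _ => hre x)]
      -- reindex along the bijection `σ_y`
      exact Fintype.sum_equiv (Equiv.ofBijective (sig r y) (hnd.1 y)) _ _ (fun x => rfl)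
    have hXinv : ∀ g : YBGroup r,
        MonoidAlgebra.of K (YBGroup r) g * s = s * MonoidAlgebra.of K (YBGroup r) g →
        MonoidAlgebra.of K (YBGroup r) g⁻¹ * s = s * MonoidAlgebra.of K (YBGroup r) g⁻¹ := by
      intro g hg
      have hc : Commute (((MonoidAlgebra.of K (YBGroup r)).toHomUnits g :
          (MonoidAlgebra K (YBGroup r))ˣ) : MonoidAlgebra K (YBGroup r)) s := by
        simpa [Commute, SemiconjBy, MonoidHom.coe_toHomUnits] using hg
      have hc2 := hc.units_inv_left
      rw [← map_inv] at hc2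
      simpa only [Commute, SemiconjBy, MonoidHom.coe_toHomUnits] using hc2
    intro g
    induction g using PresentedGroup.induction_on with
    | H w =>
      induction w using FreeGroup.induction_on with
      | C1 => rw [map_one, map_one, one_mul, mul_one]
      | of x => exact hX x
      | inv_of x hx =>
        rw [map_inv]
        exact hXinv _ hx
      | mul a b ha hb =>
        rw [map_mul, map_mul, mul_assoc, hb, ← mul_assoc, ha, mul_assoc]
  intro b
  induction b using MonoidAlgebra.induction_on with
  | of g => exact hgen g
  | add f g hf hg => rw [add_mul, mul_add, hf, hg]
  | smul c f hf => rw [smul_mul_assoc, mul_smul_comm, hf]
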